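/- Let $E$ be a complex Banach lattice, $B$ a closed densely defined real operator on $E$ whose kernel is spanned by a quasi-interior point $v \ge 0$, and suppose the dual kernel $\ker B'$ contains a strictly positive functional $\psi$ with $\langle \psi, v \rangle = 1$. Let $A$ be a closed densely defined real operator with $\ker A' \ni \psi$ as well (i.e., $A'\psi = 0$). Suppose $0 \lneq f \in E$ and $\delta > 0$ are such that $R(\lambda, B) f \ge R(\lambda, A) f \ge 0$ for all $\lambda \in (0, \delta)$. Then $R(\lambda, B) f = R(\lambda, A) f$ for all $\lambda \in (0, \delta)$. -/

import Mathlib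

/-- Membership in the principal ideal `E_v` generated by `v`. -/
def InPrincipalIdeal {E : Type*} [NormedAddCommGroup E] [Lattice E] [HasSolidNorm E] [IsOrderedAddMonoid E] [NormedSpace ℝ E]
    (v x : E) : Prop :=
  ∃ c : ℝ, 0 < c ∧ |x| ≤ c • v

/-- `R` is the resolvent of the (unbounded) operator `A` at `lam`. -/
def IsResolventAt {E : Type*} [NormedAddCommGroup E] [Lattice E] [HasSolidNorm E] [IsOrderedAddMonoid E] [NormedSpace ℝ E]
    (A : E →ₗ.[ℝ] E) (lam : ℝ) (R : E →L[ℝ] E) : Prop :=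
  (∀ x : A.domain, R (lam • (x : E) - A x) = x) ∧
  (∀ f : E, ∃ h : R f ∈ A.domain, lam • R f - A ⟨R f, h⟩ = f)

/-- If `ker B` is spanned by a quasi-interior point `v ≥ 0`, the dual kernels of both `A`
and `B` contain a strictly positive functional `ψ` with `⟨ψ, v⟩ = 1`, and
`R(λ,B) f ≥ R(λ,A) f ≥ 0` for all `λ ∈ (0, δ)`, then `R(λ,B) f = R(λ,A) f` there. -/
theorem stmt17 {E : Type*} [NormedAddCommGroup E] [Lattice E] [HasSolidNorm E] [IsOrderedAddMonoid E] [NormedSpace ℝ E] [CompleteSpace E]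
    (A B : E →ₗ.[ℝ] E)
    (hAclosed : IsClosed (A.graph : Set (E × E))) (hAdense : Dense (A.domain : Set E))
    (hBclosed : IsClosed (B.graph : Set (E × E))) (hBdense : Dense (B.domain : Set E))
    (v : E) (hv : 0 ≤ v) (hvq : Dense {x : E | InPrincipalIdeal v x})
    -- `ker B` is spanned by `v`:
    (hvmem : ∃ hv' : v ∈ B.domain, B ⟨v, hv'⟩ = 0)
    (hker : ∀ x : B.domain, B x = 0 → ∃ a : ℝ, (x : E) = a • v)
    (ψ : E →L[ℝ] ℝ)
    (hψstrict : ∀ g : E, 0 ≤ g → g ≠ 0 → 0 < ψ g)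
    (hψv : ψ v = 1)
    -- `ψ ∈ ker B'` and `ψ ∈ ker A'`:
    (hψB : ∀ x : B.domain, ψ (B x) = 0)
    (hψA : ∀ x : A.domain, ψ (A x) = 0)
    (δ : ℝ) (hδ : 0 < δ)
    (RA RB : ℝ → E →L[ℝ] E)
    (hRA : ∀ lam ∈ Set.Ioo 0 δ, IsResolventAt A lam (RA lam))
    (hRB : ∀ lam ∈ Set.Ioo 0 δ, IsResolventAt B lam (RB lam))
    (f : E) (hf : 0 ≤ f) (hf0 : f ≠ 0)
    (hdom : ∀ lam ∈ Set.Ioo 0 δ, 0 ≤ RA lam f ∧ RA lam f ≤ RB lam f) :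
    ∀ lam ∈ Set.Ioo 0 δ, RB lam f = RA lam f := by
  intro lam hlam
  obtain ⟨hA1, hA2⟩ := hRA lam hlam
  obtain ⟨hB1, hB2⟩ := hRB lam hlam
  obtain ⟨hAm, hAeq⟩ := hA2 f
  obtain ⟨hBm, hBeq⟩ := hB2 f
  have hψRA : lam * ψ (RA lam f) = ψ f := by
    have := congrArg ψ hAeq
    simpa [map_sub, map_smul, hψA ⟨RA lam f, hAm⟩, smul_eq_mul] using this
  have hψRB : lam * ψ (RB lam f) = ψ f := by
    have := congrArg ψ hBeq
    simpa [map_sub, map_smul, hψB ⟨RB lam f, hBm⟩, smul_eq_mul] using this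
  have hlam0 : lam ≠ 0 := ne_of_gt hlam.1
  have hψdiff : ψ (RB lam f - RA lam f) = 0 := by
    have : lam * ψ (RB lam f - RA lam f) = 0 := by
      rw [map_sub, mul_sub, hψRA, hψRB, sub_self]
    exact (mul_eq_zero.mp this).resolve_left hlam0
  obtain ⟨hpos, hle⟩ := hdom lam hlam
  have hge : 0 ≤ RB lam f - RA lam f := sub_nonneg.mpr hle
  by_contra hne
  have hne' : RB lam f - RA lam f ≠ 0 := fun h => hne (sub_eq_zero.mp h)
  exact absurd hψdiff (ne_of_gt (hψstrict _ hge hne'))
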